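/- Let m be a positive integer, p a prime with p ≡ 1 (mod 2m), 𝒜 a subset of F_p^*/F_p^{*2m} with |𝒜| = m, and let Θ_p be the set of multiplicative characters χ of F_p with χ^{2m} = χ₀ (the unique subgroup of order 2m of the character group); every χ ∈ Θ_p is constant on each coset A ∈ F_p^*/F_p^{*2m}, and we write χ(A) for that value. Define f_χ = (1/m)·Σ_{A∈𝒜} χ̄(A) if χ ∈ Θ_p and χ ≠ χ₀, and f_χ = 0 otherwise. Then: (i) F_{p,𝒜}(j) = Σ_χ f_χ·χ(j) for every j ∈ F_p; (ii) Σ_χ |f_χ|² = 1 (so every 2m-th residue class sequence f_{p,𝒜}^{s,ℓ} is a unimodularizable character combination sequence with character combination {f_χ}); and (iii) f_{χ̄} = conj(f_χ) for every multiplicative character χ. -/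

import Mathlib

open scoped BigOperators Classical ComplexOrder

noncomputable section

namespace Paper

/-- `Ω(x,y) = Σ_{n ∈ ℤ} max(0, 1 − |n·x − y|)²`. -/
def Omega (x y : ℝ) : ℝ := ∑' n : ℤ, max 0 (1 - |(n : ℝ) * x - y|) ^ 2

/-- The extension of a finite sequence of length `ℓ` by zero to all of `ℤ`. -/
def ext (ℓ : ℕ) (f : ℕ → ℂ) (j : ℤ) : ℂ :=
  if 0 ≤ j ∧ j < (ℓ : ℤ) then f j.toNat else 0

/-- Aperiodic crosscorrelation `C_{f,g}(s)` of two sequences of length `ℓ` at shift `s`. -/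
def XC (ℓ : ℕ) (f g : ℕ → ℂ) (s : ℤ) : ℂ :=
  ∑' j : ℤ, ext ℓ f j * (starRingEnd ℂ) (ext ℓ g (j + s))

/-- Crosscorrelation demerit factor `CDF(f,g)`. -/
def CDF (ℓ : ℕ) (f g : ℕ → ℂ) : ℝ :=
  (∑' s : ℤ, norm (XC ℓ f g s) ^ 2) /
    (norm (XC ℓ f f 0) * norm (XC ℓ g g 0))

/-- Autocorrelation demerit factor `DF(f) = CDF(f,f) − 1`. -/
def DF (ℓ : ℕ) (f : ℕ → ℂ) : ℝ := CDF ℓ f f - 1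

/-- `u` is a unimodularization of the length-`ℓ` sequence `f`: it agrees with `f` at
nonzero terms and replaces each zero term by a complex number of modulus `1`. -/
def IsUnimodularization (ℓ : ℕ) (f u : ℕ → ℂ) : Prop :=
  ∀ j < ℓ, (f j ≠ 0 → u j = f j) ∧ (f j = 0 → norm (u j) = 1)

/-- The multiplicative characters of `F_p = ZMod p`, extended by `χ(0) = 0`. -/
abbrev MChar (p : ℕ) := MulChar (ZMod p) ℂ

instance (p : ℕ) [Fact p.Prime] : Fintype (MChar p) := Fintype.ofFinite _

/-- The Gauss sum `τ(χ) = Σ_{x ∈ F_p} e^{2πi x / p} χ(x)` (note `χ(0) = 0`). -/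
def gauss (p : ℕ) [Fact p.Prime] (χ : MChar p) : ℂ :=
  ∑ x : ZMod p, Complex.exp (2 * Real.pi * Complex.I * (x.val : ℂ) / (p : ℂ)) * χ x

/-- The quadratic character `η` of `F_p`, with values in `ℂ`. -/
def quadChar (p : ℕ) [Fact p.Prime] : MChar p :=
  (quadraticChar (ZMod p)).ringHomComp (Int.castRingHom ℂ)

/-- `c` is a character combination: the coefficient of the trivial character vanishes and
the sum of the squared magnitudes of the coefficients is `1`. -/
def IsCharCombo (p : ℕ) [Fact p.Prime] (c : MChar p → ℂ) : Prop :=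
  c 1 = 0 ∧ ∑ χ : MChar p, norm (c χ) ^ 2 = 1

/-- The function `F(a) = Σ_χ f_χ · χ(a)` attached to a character combination. -/
def combFun (p : ℕ) [Fact p.Prime] (c : MChar p → ℂ) (a : ZMod p) : ℂ :=
  ∑ χ : MChar p, c χ * χ a

/-- The character combination sequence with shift `s`: its `j`-th term is `F(s + j)`. -/
def combSeq (p : ℕ) [Fact p.Prime] (c : MChar p → ℂ) (s : ℤ) : ℕ → ℂ :=
  fun j => combFun p c (((s + (j : ℤ)) : ℤ) : ZMod p)

/-- A character combination is unimodularizable when `|F(a)| = 1` for all `a ≠ 0`. -/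
def Unimodularizable (p : ℕ) [Fact p.Prime] (c : MChar p → ℂ) : Prop :=
  ∀ a : ZMod p, a ≠ 0 → norm (combFun p c a) = 1

/-- The parameter `S_{f,g}` of a pair of character combination sequences. -/
def Sparam (p : ℕ) [Fact p.Prime] (c d : MChar p → ℂ) : ℂ :=
  (∑ φ : MChar p, ∑ χ : MChar p, ∑ ψ : MChar p, ∑ ω : MChar p,
      if φ * χ = ψ * ω ∧ φ ≠ χ⁻¹ ∧ φ ≠ ψ ∧ φ ≠ ω then
        c φ * d χ * (starRingEnd ℂ) (c ψ * d ω) *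
          (gauss p φ * gauss p χ * (starRingEnd ℂ) (gauss p ψ * gauss p ω)) / (p : ℂ) ^ 2
      else 0)
    - ((∑ φ : MChar p, norm (c φ * d φ) ^ 2 : ℝ) : ℂ)
    - ((∑ φ : MChar p, norm (c φ * d φ⁻¹) ^ 2 : ℝ) : ℂ)
    - ∑ φ : MChar p, c φ * (starRingEnd ℂ) (c φ⁻¹) * d φ⁻¹ * (starRingEnd ℂ) (d φ)
    + ((norm (c (quadChar p) * d (quadChar p)) ^ 2 : ℝ) : ℂ)

/-- The parameter `S_{f,f}` of a single character combination sequence. -/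
def SparamAuto (p : ℕ) [Fact p.Prime] (c : MChar p → ℂ) : ℂ :=
  (∑ φ : MChar p, ∑ χ : MChar p, ∑ ψ : MChar p, ∑ ω : MChar p,
      if φ * χ = ψ * ω ∧ φ ≠ χ⁻¹ ∧ φ ≠ ψ ∧ φ ≠ ω then
        c φ * c χ * (starRingEnd ℂ) (c ψ * c ω) *
          (gauss p φ * gauss p χ * (starRingEnd ℂ) (gauss p ψ * gauss p ω)) / (p : ℂ) ^ 2
      else 0)
    - 2 * ((∑ φ : MChar p, norm (c φ * c φ⁻¹) ^ 2 : ℝ) : ℂ)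
    - ((∑ φ : MChar p, norm (c φ) ^ 4 : ℝ) : ℂ)
    + ((norm (c (quadChar p)) ^ 4 : ℝ) : ℂ)

/-- The parameter `U_{f,g}`. -/
def Uparam (p : ℕ) [Fact p.Prime] (c d : MChar p → ℂ) : ℝ :=
  norm (∑ φ : MChar p, c φ * (starRingEnd ℂ) (d φ)) ^ 2

/-- The parameter `V_{f,g}`. -/
def Vparam (p : ℕ) [Fact p.Prime] (c d : MChar p → ℂ) : ℝ :=
  norm (∑ φ : MChar p, c φ * d φ⁻¹ * φ (-1)) ^ 2

/-- The parameter `W_f`. -/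
def Wparam (p : ℕ) [Fact p.Prime] (c : MChar p → ℂ) : ℝ :=
  ∑ φ : MChar p, norm (c φ)

/-- Periodic crosscorrelation of two periodic sequences of period `n` at shift `s`. -/
def PC (n : ℕ) [NeZero n] (u v : ZMod n → ℂ) (s : ZMod n) : ℂ :=
  ∑ j : ZMod n, u j * (starRingEnd ℂ) (v (j + s))

/-- Fourier transform `û_a = Σ_x u_x e^{2πi a x / n}` of a periodic sequence of period `n`. -/
def FT (n : ℕ) [NeZero n] (u : ZMod n → ℂ) (a : ZMod n) : ℂ :=
  ∑ x : ZMod n, u x * Complex.exp (2 * Real.pi * Complex.I * ((a.val : ℂ) * (x.val : ℂ)) / (n : ℂ))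

/-- `α` is a primitive element of `F_p`, i.e. a generator of the unit group. -/
def IsPrimitive (p : ℕ) (α : (ZMod p)ˣ) : Prop :=
  ∀ x : (ZMod p)ˣ, x ∈ Subgroup.zpowers α

/-- The subgroup `F_p^{*2m}` of `2m`-th powers in the unit group of `F_p`. -/
def powSubgroup (p m : ℕ) : Subgroup (ZMod p)ˣ :=
  (powMonoidHom (2 * m) : (ZMod p)ˣ →* (ZMod p)ˣ).range

/-- The quotient group `F_p^* / F_p^{*2m}` of `2m`-th power residue classes. -/
abbrev ResCosets (p m : ℕ) := (ZMod p)ˣ ⧸ powSubgroup p m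

/-- The function `F_{p,𝒜}`: `0` at `0`, `+1` on the union of the cosets in `𝒜`,
`−1` on the remaining nonzero elements. -/
def resFun (p m : ℕ) (A : Finset (ResCosets p m)) (j : ZMod p) : ℂ :=
  if h : IsUnit j then (if (QuotientGroup.mk h.unit : ResCosets p m) ∈ A then 1 else -1) else 0

/-- The sequence of a `2m`-th residue class construction, with shift `s`. -/
def resSeq (p m : ℕ) (A : Finset (ResCosets p m)) (s : ℤ) : ℕ → ℂ :=
  fun j => resFun p m A (((s + (j : ℤ)) : ℤ) : ZMod p)

/-- The character combination coefficients of a `2m`-th residue class sequence: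
`f_χ = (1/m) Σ_{A ∈ 𝒜} χ̄(A)` for nontrivial `χ` in the subgroup `Θ_p` of order `2m`
(characterized by `χ^{2m} = 1`), and `f_χ = 0` otherwise; `χ̄(A)` is evaluated at a
representative of the coset `A`, on which `χ̄` is constant. -/
def resCoef (p m : ℕ) [Fact p.Prime] (A : Finset (ResCosets p m)) (χ : MChar p) : ℂ :=
  if χ ≠ 1 ∧ χ ^ (2 * m) = 1 then
    (1 / (m : ℂ)) * ∑ B ∈ A, χ⁻¹ ((B.out : (ZMod p)ˣ) : ZMod p)
  else 0

/-- The image of the coset `B` under multiplication by `−1`. -/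
def negCoset (p m : ℕ) (B : ResCosets p m) : ResCosets p m :=
  QuotientGroup.mk ((-1 : (ZMod p)ˣ) * B.out)

/-- The quadratic residue function `H̃_p`: `+1` on `F_p^{*2}`, `−1` on `α F_p^{*2}`,
and `0` at `0`. -/
def Htilde (p : ℕ) (α : (ZMod p)ˣ) (x : ZMod p) : ℂ :=
  if ∃ y : (ZMod p)ˣ, x = ((y ^ 2 : (ZMod p)ˣ) : ZMod p) then 1
  else if ∃ y : (ZMod p)ˣ, x = ((α * y ^ 2 : (ZMod p)ˣ) : ZMod p) then -1
  else 0

/-- The quartic residue function `F̃_p`: `+1` on `F_p^{*4} ∪ αF_p^{*4}`,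
`−1` on `α²F_p^{*4} ∪ α³F_p^{*4}`, and `0` at `0`. -/
def Ftilde (p : ℕ) (α : (ZMod p)ˣ) (x : ZMod p) : ℂ :=
  if (∃ y : (ZMod p)ˣ, x = ((y ^ 4 : (ZMod p)ˣ) : ZMod p)) ∨
      (∃ y : (ZMod p)ˣ, x = ((α * y ^ 4 : (ZMod p)ˣ) : ZMod p)) then 1
  else if (∃ y : (ZMod p)ˣ, x = ((α ^ 2 * y ^ 4 : (ZMod p)ˣ) : ZMod p)) ∨
      (∃ y : (ZMod p)ˣ, x = ((α ^ 3 * y ^ 4 : (ZMod p)ˣ) : ZMod p)) then -1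
  else 0

/-- The quartic residue function `G̃_p`: `+1` on `F_p^{*4} ∪ α³F_p^{*4}`,
`−1` on `αF_p^{*4} ∪ α²F_p^{*4}`, and `0` at `0`. -/
def Gtilde (p : ℕ) (α : (ZMod p)ˣ) (x : ZMod p) : ℂ :=
  if (∃ y : (ZMod p)ˣ, x = ((y ^ 4 : (ZMod p)ˣ) : ZMod p)) ∨
      (∃ y : (ZMod p)ˣ, x = ((α ^ 3 * y ^ 4 : (ZMod p)ˣ) : ZMod p)) then 1
  else if (∃ y : (ZMod p)ˣ, x = ((α * y ^ 4 : (ZMod p)ˣ) : ZMod p)) ∨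
      (∃ y : (ZMod p)ˣ, x = ((α ^ 2 * y ^ 4 : (ZMod p)ˣ) : ZMod p)) then -1
  else 0

/-- The quadratic residue sequence `h̃_p^{s,ℓ}` (as a function; the length is used
in the correlation functionals). -/
def hSeq (p : ℕ) (α : (ZMod p)ˣ) (s : ℤ) : ℕ → ℂ :=
  fun j => Htilde p α (((s + (j : ℤ)) : ℤ) : ZMod p)

/-- The quartic residue sequence `f̃_p^{s,ℓ}`. -/
def fSeq (p : ℕ) (α : (ZMod p)ˣ) (s : ℤ) : ℕ → ℂ :=
  fun j => Ftilde p α (((s + (j : ℤ)) : ℤ) : ZMod p)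

/-- The quartic residue sequence `g̃_p^{s,ℓ}`. -/
def gSeq (p : ℕ) (α : (ZMod p)ˣ) (s : ℤ) : ℕ → ℂ :=
  fun j => Gtilde p α (((s + (j : ℤ)) : ℤ) : ZMod p)

section AuxResidue

variable {m p : ℕ} [Fact p.Prime]

private lemma aux_card_units : Fintype.card (ZMod p)ˣ = p - 1 := by
  rw [ZMod.card_units_eq_totient, Nat.totient_prime Fact.out]

private lemma card_resCosets (hm : 0 < m) (hp1 : p % (2 * m) = 1) :
    Nat.card (ResCosets p m) = 2 * m := by
  classical
  obtain ⟨g, hg⟩ := IsCyclic.exists_generator (α := (ZMod p)ˣ)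
  have hp2 : 2 ≤ p := (Fact.out : p.Prime).two_le
  have hdm := Nat.div_add_mod p (2 * m)
  obtain ⟨k, hk1, hk2⟩ : ∃ k, p - 1 = 2 * m * k ∧ 0 < k := by
    refine ⟨p / (2 * m), by omega, Nat.pos_of_ne_zero fun h0 => ?_⟩
    rw [h0, Nat.mul_zero] at hdm
    omega
  have horder : orderOf g = p - 1 := by
    rw [orderOf_eq_card_of_forall_mem_zpowers hg, Nat.card_eq_fintype_card, aux_card_units]
  have hH : powSubgroup p m = Subgroup.zpowers (g ^ (2 * m)) := by
    ext x
    constructor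
    · rintro ⟨y, rfl⟩
      obtain ⟨j, rfl⟩ := Subgroup.mem_zpowers_iff.mp (hg y)
      refine Subgroup.mem_zpowers_iff.mpr ⟨j, ?_⟩
      show (g ^ (2 * m)) ^ j = (g ^ j) ^ (2 * m)
      rw [← zpow_natCast g (2 * m), ← zpow_mul, ← zpow_natCast (g ^ j) (2 * m), ← zpow_mul,
        mul_comm]
    · rintro hx
      obtain ⟨j, hj⟩ := Subgroup.mem_zpowers_iff.mp hx
      refine ⟨g ^ j, ?_⟩
      show (g ^ j) ^ (2 * m) = x
      rw [← hj, ← zpow_natCast g (2 * m), ← zpow_mul, ← zpow_natCast (g ^ j) (2 * m), ← zpow_mul,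
        mul_comm]
  have hHcard : Nat.card (powSubgroup p m) = k := by
    rw [hH, Nat.card_zpowers, orderOf_pow, horder, hk1,
      Nat.gcd_eq_right (dvd_mul_right (2 * m) k), Nat.mul_div_cancel_left k (by omega)]
  have hlag := Subgroup.card_eq_card_quotient_mul_card_subgroup (powSubgroup p m)
  rw [Nat.card_eq_fintype_card, aux_card_units, hk1, hHcard] at hlag
  exact (Nat.eq_of_mul_eq_mul_right hk2 hlag.symm)

private lemma sum_theta (hm : 0 < m) (hp1 : p % (2 * m) = 1) (u : (ZMod p)ˣ) :
    ∑ χ ∈ Finset.univ.filter (fun χ : MChar p => χ ^ (2 * m) = 1), χ (u : ZMod p)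
      = if u ∈ powSubgroup p m then ((2 * m : ℕ) : ℂ) else 0 := by
  classical
  have hQcard : Nat.card (ResCosets p m) = 2 * m := card_resCosets hm hp1
  have hexp : NeZero ((Monoid.exponent (ResCosets p m) : ℂ)) :=
    ⟨Nat.cast_ne_zero.mpr (Monoid.exponent_ne_zero_of_finite (G := ResCosets p m))⟩
  have e := (CommGroup.monoidHom_mulEquiv_of_hasEnoughRootsOfUnity (ResCosets p m) ℂ).some
  have hfin : Finite (ResCosets p m →* ℂˣ) := Finite.of_equiv _ e.symm.toEquiv
  have : Fintype (ResCosets p m →* ℂˣ) := Fintype.ofFinite _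
  set e2 := (MulChar.mulEquivToUnitHom : MChar p ≃* ((ZMod p)ˣ →* ℂˣ)) with he2
  have hstep : ∑ χ ∈ Finset.univ.filter (fun χ : MChar p => χ ^ (2 * m) = 1), χ (u : ZMod p)
      = ∑ ψ : ResCosets p m →* ℂˣ, ((ψ (QuotientGroup.mk u) : ℂˣ) : ℂ) := by
    refine (Finset.sum_bij
      (fun (ψ : ResCosets p m →* ℂˣ) _ =>
        e2.symm (ψ.comp (QuotientGroup.mk' (powSubgroup p m)))) ?_ ?_ ?_ ?_).symm
    · intro ψ _
      simp only [Finset.mem_filter, Finset.mem_univ, true_and]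
      rw [← map_pow e2.symm]
      convert map_one e2.symm
      ext v
      simp only [MonoidHom.pow_apply, MonoidHom.comp_apply, QuotientGroup.mk'_apply,
        MonoidHom.one_apply, ← map_pow]
      have h1 : (QuotientGroup.mk (v ^ (2 * m)) : ResCosets p m) = 1 :=
        (QuotientGroup.eq_one_iff _).mpr (MonoidHom.mem_range.mpr ⟨v, rfl⟩)
      rw [show ((QuotientGroup.mk v : ResCosets p m)) ^ (2 * m) = QuotientGroup.mk (v ^ (2 * m))
        from (map_pow (QuotientGroup.mk' (powSubgroup p m)) v (2 * m)).symm, h1, map_one]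
    · intro ψ₁ _ ψ₂ _ h
      have h' := e2.symm.injective h
      refine MonoidHom.ext fun q => ?_
      obtain ⟨v, rfl⟩ := QuotientGroup.mk'_surjective (powSubgroup p m) q
      exact DFunLike.congr_fun h' v
    · intro χ hχ
      simp only [Finset.mem_filter, Finset.mem_univ, true_and] at hχ
      have hker : ∀ x ∈ powSubgroup p m, (e2 χ) x = 1 := by
        intro x hx
        obtain ⟨y, rfl⟩ := hx
        show (e2 χ) (y ^ (2 * m)) = 1
        rw [map_pow, ← MonoidHom.pow_apply, ← map_pow e2, hχ, map_one, MonoidHom.one_apply]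
      refine ⟨QuotientGroup.lift (powSubgroup p m) (e2 χ) hker, Finset.mem_univ _, ?_⟩
      rw [MulEquiv.symm_apply_eq]
      refine MonoidHom.ext fun v => ?_
      simp
      rfl
    · intro ψ _
      exact (MulChar.equivToUnitHom_symm_coe
        (ψ.comp (QuotientGroup.mk' (powSubgroup p m))) u).symm
  rw [hstep]
  by_cases hq : (QuotientGroup.mk u : ResCosets p m) = 1
  · rw [if_pos ((QuotientGroup.eq_one_iff u).mp hq)]
    have hcardD : Fintype.card (ResCosets p m →* ℂˣ) = 2 * m := by
      rw [← Nat.card_eq_fintype_card, Nat.card_congr e.toEquiv, hQcard]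
    simp only [hq, map_one, Units.val_one, Finset.sum_const, Finset.card_univ, nsmul_eq_mul,
      mul_one, hcardD]
  · rw [if_neg (fun h => hq ((QuotientGroup.eq_one_iff u).mpr h))]
    obtain ⟨φ, hφ⟩ := CommGroup.exists_apply_ne_one_of_hasEnoughRootsOfUnity
      (ResCosets p m) ℂ hq
    have hφ1 : ((φ (QuotientGroup.mk u) : ℂˣ) : ℂ) ≠ 1 := fun h => hφ (Units.ext h)
    refine eq_zero_of_mul_eq_self_left hφ1 ?_
    rw [Finset.mul_sum]
    exact Fintype.sum_bijective _ (Group.mulLeft_bijective φ) _ _ fun ψ => by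
      simp [MonoidHom.mul_apply]

private lemma sum_theta' (hm : 0 < m) (hp1 : p % (2 * m) = 1) (u : (ZMod p)ˣ) :
    ∑ χ ∈ Finset.univ.filter (fun χ : MChar p => χ ≠ 1 ∧ χ ^ (2 * m) = 1), χ (u : ZMod p)
      = (if u ∈ powSubgroup p m then ((2 * m : ℕ) : ℂ) else 0) - 1 := by
  classical
  have h1mem : (1 : MChar p) ∈ Finset.univ.filter (fun χ : MChar p => χ ^ (2 * m) = 1) := by
    simp
  have hset : Finset.univ.filter (fun χ : MChar p => χ ≠ 1 ∧ χ ^ (2 * m) = 1)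
      = (Finset.univ.filter (fun χ : MChar p => χ ^ (2 * m) = 1)).erase 1 := by
    ext χ; simp [Finset.mem_erase, and_comm]
  rw [hset, eq_sub_iff_add_eq, ← sum_theta hm hp1 u,
    ← Finset.add_sum_erase _ _ h1mem, MulChar.one_apply_coe, add_comm]

private lemma conj_char (χ : MChar p) (u : (ZMod p)ˣ) :
    (starRingEnd ℂ) (χ (u : ZMod p)) = χ⁻¹ (u : ZMod p) := by
  have hne : p - 1 ≠ 0 := by have := (Fact.out : p.Prime).two_le; omega
  have hpow : (χ (u : ZMod p)) ^ (p - 1) = 1 := by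
    rw [← map_pow, ← Units.val_pow_eq_pow_val,
      show u ^ (p - 1) = 1 by rw [← aux_card_units (p := p)]; exact pow_card_eq_one,
      Units.val_one, map_one]
  have habs : norm (χ (u : ZMod p)) = 1 := by
    exact Complex.norm_eq_one_of_pow_eq_one hpow hne
  rw [MulChar.inv_apply_eq_inv', ← Complex.inv_eq_conj habs]

end AuxResidue

/-- Every `2m`-th residue class sequence is a unimodularizable character combination
sequence: the generating function `F_{p,𝒜}` equals `Σ_χ f_χ χ`, with coefficients `f_χ`
supported on the nontrivial characters of the subgroup of order `2m`, the squared
magnitudes of the coefficients sum to `1`, and `f_{χ̄} = conj(f_χ)`. -/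
theorem residue_class_is_char_combo
    (m p : ℕ) (hm : 0 < m) [Fact p.Prime] (hp1 : p % (2 * m) = 1)
    (A : Finset (ResCosets p m)) (hA : A.card = m) :
    (∀ j : ZMod p, resFun p m A j = ∑ χ : MChar p, resCoef p m A χ * χ j) ∧
    (∑ χ : MChar p, norm (resCoef p m A χ) ^ 2 = 1) ∧
    (∀ χ : MChar p, resCoef p m A χ⁻¹ = (starRingEnd ℂ) (resCoef p m A χ)) := by
  classical
  have hm0 : (m : ℂ) ≠ 0 := Nat.cast_ne_zero.mpr hm.ne'
  have hcond : ∀ (B : ResCosets p m) (u : (ZMod p)ˣ),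
      ((B.out)⁻¹ * u ∈ powSubgroup p m) ↔ B = (QuotientGroup.mk u : ResCosets p m) := by
    intro B u
    rw [← QuotientGroup.eq_one_iff,
      show (QuotientGroup.mk ((B.out)⁻¹ * u) : ResCosets p m)
        = (QuotientGroup.mk (B.out))⁻¹ * QuotientGroup.mk u from by
          rw [← QuotientGroup.mk'_apply, map_mul, map_inv]; rfl,
      inv_mul_eq_one, QuotientGroup.out_eq']
  have key1 : ∀ u : (ZMod p)ˣ, ∑ χ : MChar p, resCoef p m A χ * χ (u : ZMod p)
      = (1/(m:ℂ)) * ((if (QuotientGroup.mk u : ResCosets p m) ∈ A then ((2*m : ℕ):ℂ) else 0)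
          - (m:ℂ)) := by
    intro u
    have hres : ∀ χ : MChar p, resCoef p m A χ * χ (u : ZMod p) =
        if χ ≠ 1 ∧ χ ^ (2*m) = 1 then
          (1/(m:ℂ)) * ∑ B ∈ A, χ ((((B.out)⁻¹ * u : (ZMod p)ˣ)) : ZMod p) else 0 := by
      intro χ
      simp only [resCoef]
      split_ifs with h
      · rw [mul_assoc, Finset.sum_mul]
        congr 1
        refine Finset.sum_congr rfl fun B _ => ?_
        rw [MulChar.inv_apply', ← map_mul]
        congr 1
        rw [Units.val_mul, Units.val_inv_eq_inv_val]
      · exact zero_mul _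
    calc ∑ χ : MChar p, resCoef p m A χ * χ (u : ZMod p)
        = ∑ χ : MChar p, if χ ≠ 1 ∧ χ ^ (2*m) = 1 then
            (1/(m:ℂ)) * ∑ B ∈ A, χ ((((B.out)⁻¹ * u : (ZMod p)ˣ)) : ZMod p) else 0 :=
          Finset.sum_congr rfl fun χ _ => hres χ
      _ = ∑ χ ∈ Finset.univ.filter (fun χ : MChar p => χ ≠ 1 ∧ χ ^ (2*m) = 1),
            (1/(m:ℂ)) * ∑ B ∈ A, χ ((((B.out)⁻¹ * u : (ZMod p)ˣ)) : ZMod p) :=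
          (Finset.sum_filter _ _).symm
      _ = (1/(m:ℂ)) * ∑ B ∈ A, ∑ χ ∈ Finset.univ.filter
            (fun χ : MChar p => χ ≠ 1 ∧ χ ^ (2*m) = 1),
            χ ((((B.out)⁻¹ * u : (ZMod p)ˣ)) : ZMod p) := by
          rw [← Finset.mul_sum, Finset.sum_comm]
      _ = (1/(m:ℂ)) * ∑ B ∈ A, ((if B = (QuotientGroup.mk u : ResCosets p m)
            then ((2*m : ℕ):ℂ) else 0) - 1) := by
          congr 1
          refine Finset.sum_congr rfl fun B _ => ?_
          rw [sum_theta' hm hp1]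
          simp only [hcond B u]
      _ = (1/(m:ℂ)) * ((if (QuotientGroup.mk u : ResCosets p m) ∈ A then ((2*m : ℕ):ℂ) else 0)
            - (m:ℂ)) := by
          rw [Finset.sum_sub_distrib,
            Finset.sum_ite_eq' A (QuotientGroup.mk u : ResCosets p m) (fun _ => ((2*m : ℕ):ℂ)),
            Finset.sum_const, hA, nsmul_eq_mul, mul_one]
  refine ⟨?_, ?_, ?_⟩
  · intro j
    by_cases hj : IsUnit j
    · obtain ⟨u, rfl⟩ : ∃ u : (ZMod p)ˣ, (u : ZMod p) = j := ⟨hj.unit, hj.unit_spec⟩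
      rw [key1 u]
      simp only [resFun]
      rw [dif_pos hj, show hj.unit = u from Units.ext hj.unit_spec]
      by_cases hmem : (QuotientGroup.mk u : ResCosets p m) ∈ A
      · rw [if_pos hmem, if_pos hmem]
        push_cast
        field_simp
        ring
      · rw [if_neg hmem, if_neg hmem]
        field_simp
        ring
    · simp only [resFun]
      rw [dif_neg hj]
      symm
      refine Finset.sum_eq_zero fun χ _ => ?_
      rw [MulChar.map_nonunit χ hj, mul_zero]
  · have habs2 : ∀ z : ℂ, ((norm z ^ 2 : ℝ) : ℂ) = z * (starRingEnd ℂ) z := fun z => by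
      rw [Complex.mul_conj, Complex.sq_norm]
    have hterm : ∀ χ : MChar p, resCoef p m A χ * (starRingEnd ℂ) (resCoef p m A χ) =
        if χ ≠ 1 ∧ χ ^ (2*m) = 1 then
          (1/(m:ℂ)) * (1/(m:ℂ)) *
            ∑ B ∈ A, ∑ C ∈ A, χ ((((B.out)⁻¹ * C.out : (ZMod p)ˣ)) : ZMod p)
        else 0 := by
      intro χ
      simp only [resCoef]
      split_ifs with h
      · rw [map_mul, map_sum, show (starRingEnd ℂ) (1/(m:ℂ)) = 1/(m:ℂ) from by simp]
        have hconj : ∀ C : ResCosets p m,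
            (starRingEnd ℂ) (χ⁻¹ ((C.out : (ZMod p)ˣ) : ZMod p))
              = χ ((C.out : (ZMod p)ˣ) : ZMod p) := fun C => by
          rw [conj_char, inv_inv]
        simp_rw [hconj]
        rw [mul_mul_mul_comm, Finset.sum_mul_sum]
        congr 1
        refine Finset.sum_congr rfl fun B _ => Finset.sum_congr rfl fun C _ => ?_
        rw [MulChar.inv_apply', ← map_mul]
        congr 1
        rw [Units.val_mul, Units.val_inv_eq_inv_val]
      · simp
    have key : ∑ χ : MChar p, ((norm (resCoef p m A χ) ^ 2 : ℝ) : ℂ) = 1 := by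
      simp_rw [habs2]
      calc ∑ χ : MChar p, resCoef p m A χ * (starRingEnd ℂ) (resCoef p m A χ)
          = ∑ χ : MChar p, if χ ≠ 1 ∧ χ ^ (2*m) = 1 then (1/(m:ℂ)) * (1/(m:ℂ)) *
              ∑ B ∈ A, ∑ C ∈ A, χ ((((B.out)⁻¹ * C.out : (ZMod p)ˣ)) : ZMod p) else 0 :=
            Finset.sum_congr rfl fun χ _ => hterm χ
        _ = ∑ χ ∈ Finset.univ.filter (fun χ : MChar p => χ ≠ 1 ∧ χ ^ (2*m) = 1),
              (1/(m:ℂ)) * (1/(m:ℂ)) *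
              ∑ B ∈ A, ∑ C ∈ A, χ ((((B.out)⁻¹ * C.out : (ZMod p)ˣ)) : ZMod p) :=
            (Finset.sum_filter _ _).symm
        _ = (1/(m:ℂ)) * (1/(m:ℂ)) * ∑ B ∈ A, ∑ C ∈ A,
              ∑ χ ∈ Finset.univ.filter (fun χ : MChar p => χ ≠ 1 ∧ χ ^ (2*m) = 1),
              χ ((((B.out)⁻¹ * C.out : (ZMod p)ˣ)) : ZMod p) := by
            rw [← Finset.mul_sum]
            congr 1
            rw [Finset.sum_comm]
            exact Finset.sum_congr rfl fun B _ => Finset.sum_comm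
        _ = (1/(m:ℂ)) * (1/(m:ℂ)) * ∑ B ∈ A, ∑ C ∈ A,
              ((if B = C then ((2*m : ℕ):ℂ) else 0) - 1) := by
            congr 1
            refine Finset.sum_congr rfl fun B _ => Finset.sum_congr rfl fun C _ => ?_
            rw [sum_theta' hm hp1]
            have hc : ((B.out)⁻¹ * C.out ∈ powSubgroup p m) ↔ B = C := by
              rw [hcond B C.out, QuotientGroup.out_eq']
            simp only [hc]
        _ = (1/(m:ℂ)) * (1/(m:ℂ)) * ∑ B ∈ A, (((2*m : ℕ):ℂ) - (m:ℂ)) := by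
            congr 1
            refine Finset.sum_congr rfl fun B hB => ?_
            rw [Finset.sum_sub_distrib, Finset.sum_ite_eq A B (fun _ => ((2*m : ℕ):ℂ)),
              if_pos hB, Finset.sum_const, hA, nsmul_eq_mul, mul_one]
        _ = 1 := by
            rw [Finset.sum_const, hA, nsmul_eq_mul,
              show ((2*m : ℕ):ℂ) - (m:ℂ) = (m:ℂ) from by push_cast; ring]
            field_simp
    exact_mod_cast key
  · intro χ
    by_cases h : χ ≠ 1 ∧ χ ^ (2*m) = 1
    · have h' : χ⁻¹ ≠ 1 ∧ (χ⁻¹) ^ (2*m) = 1 :=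
        ⟨fun hh => h.1 (by rwa [inv_eq_one] at hh), by rw [inv_pow, h.2, inv_one]⟩
      simp only [resCoef]
      rw [if_pos h', if_pos h, map_mul, map_sum,
        show (starRingEnd ℂ) (1/(m:ℂ)) = 1/(m:ℂ) from by simp]
      congr 1
      exact Finset.sum_congr rfl fun B _ => (conj_char χ⁻¹ B.out).symm
    · have h' : ¬(χ⁻¹ ≠ 1 ∧ (χ⁻¹) ^ (2*m) = 1) := by
        intro hh
        exact h ⟨fun h1 => hh.1 (by rw [h1, inv_one]),
          by rw [← inv_inv χ, inv_pow, hh.2, inv_one]⟩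
      simp only [resCoef]
      rw [if_neg h', if_neg h, map_zero]


end Paper
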